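/- For every β > 1 there exists a unique m > 0 with tanh(βm) = m, and moreover this m satisfies m ∈ (0,1). -/

import Mathlib

open Real Set Filter Topology

private lemma continuous_tanh : Continuous Real.tanh := by
  have : Real.tanh = fun y => Real.sinh y / Real.cosh y := by
    funext y; rw [Real.tanh_eq_sinh_div_cosh]
  rw [this]
  exact Real.continuous_sinh.div Real.continuous_cosh fun x => (Real.cosh_pos x).ne'

private lemma tanh_hasDerivAt (x : ℝ) :
    HasDerivAt Real.tanh (1 / Real.cosh x ^ 2) x := by
  have h := (Real.hasDerivAt_sinh x).div (Real.hasDerivAt_cosh x) (Real.cosh_pos x).ne'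
  have : (fun y => Real.sinh y / Real.cosh y) = Real.tanh := by
    funext y; rw [Real.tanh_eq_sinh_div_cosh]
  rw [show (Real.sinh / Real.cosh) = Real.tanh from this] at h
  refine h.congr_deriv ?_
  have := Real.cosh_sq_sub_sinh_sq x
  congr 1
  nlinarith [this]

private lemma tanh_lt_one' (x : ℝ) : Real.tanh x < 1 := by
  rw [Real.tanh_eq_sinh_div_cosh, div_lt_one (Real.cosh_pos x)]
  nlinarith [Real.cosh_sub_sinh x, Real.exp_pos (-x)]

private lemma tanh_strictConcave : StrictConcaveOn ℝ (Set.Ici (0:ℝ)) Real.tanh := by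
  have hd : deriv Real.tanh = fun y => (Real.cosh y ^ 2)⁻¹ := by
    funext y
    rw [(tanh_hasDerivAt y).deriv, one_div]
  apply strictConcaveOn_of_deriv2_neg (convex_Ici 0)
    (continuous_tanh.continuousOn)
  intro x hx
  rw [interior_Ici] at hx
  have hcosh := Real.cosh_pos x
  have hsinh : 0 < Real.sinh x := Real.sinh_pos_iff.2 hx
  have h2 : HasDerivAt (fun y => (Real.cosh y ^ 2)⁻¹)
      (-(2 * Real.cosh x ^ 1 * Real.sinh x) / (Real.cosh x ^ 2) ^ 2) x := by
    exact ((Real.hasDerivAt_cosh x).pow 2).inv (pow_pos hcosh 2).ne'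
  have : deriv (deriv Real.tanh) x
      = -(2 * Real.cosh x ^ 1 * Real.sinh x) / (Real.cosh x ^ 2) ^ 2 := by
    rw [hd]; exact h2.deriv
  simp only [Function.iterate_succ, Function.iterate_zero, Function.comp_apply, id]
  rw [this]
  apply div_neg_of_neg_of_pos
  · nlinarith
  · positivity

/-- For `β > 1` there is a unique `m > 0` with `tanh (β m) = m`, and this `m` lies in `(0,1)`. -/
theorem curie_weiss_magnetization (β : ℝ) (hβ : 1 < β) :
    (∃! m : ℝ, 0 < m ∧ Real.tanh (β * m) = m) ∧
      ∀ m : ℝ, 0 < m → Real.tanh (β * m) = m → m ∈ Set.Ioo (0 : ℝ) 1 := by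
  have hβ0 : 0 < β := lt_trans one_pos hβ
  -- the auxiliary function
  set g : ℝ → ℝ := fun m => Real.tanh (β * m) - m with hg
  have hgc : Continuous g := by
    exact (continuous_tanh.comp (continuous_const.mul continuous_id)).sub continuous_id
  -- g has derivative β - 1 > 0 at 0
  have hder : HasDerivAt g (β - 1) 0 := by
    have hmul : HasDerivAt (fun m : ℝ => β * m) β 0 := by
      simpa using (hasDerivAt_id (0:ℝ)).const_mul β
    have h1 : HasDerivAt (fun m : ℝ => Real.tanh (β * m)) (1 / Real.cosh (β * 0) ^ 2 * β) 0 :=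
      (tanh_hasDerivAt (β * 0)).comp 0 hmul
    have := h1.sub (hasDerivAt_id 0)
    exact this.congr_deriv (by simp)
  -- hence g is positive somewhere in (0,1)
  obtain ⟨m₀, hm₀1, hm₀0, hgm₀⟩ : ∃ m₀, m₀ < 1 ∧ 0 < m₀ ∧ 0 < g m₀ := by
    have hslope := hasDerivAt_iff_tendsto_slope.1 hder
    have hpos : ∀ᶠ m in 𝓝[>] (0:ℝ), 0 < slope g 0 m := by
      apply (hslope.mono_left (nhdsWithin_mono _ (fun x hx => ne_of_gt hx))).eventually
      exact eventually_gt_nhds (by linarith)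
    have hlt : ∀ᶠ m in 𝓝[>] (0:ℝ), m < 1 ∧ 0 < m := by
      filter_upwards [Ioo_mem_nhdsGT_of_mem (by constructor <;> norm_num :
        (0:ℝ) ∈ Ico 0 1)] with m hm
      exact ⟨hm.2, hm.1⟩
    obtain ⟨m, hm1, hm2⟩ := (hpos.and hlt).exists
    refine ⟨m, hm2.1, hm2.2, ?_⟩
    have : slope g 0 m = g m / m := by
      simp [slope, hg, Real.tanh_zero, inv_mul_eq_div]
    rw [this] at hm1
    exact (div_pos_iff.1 hm1).resolve_right (fun h => absurd hm2.2 (not_lt.2 h.2.le)) |>.1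
  -- g is negative at 1
  have hg1 : g 1 < 0 := by
    have := tanh_lt_one' (β * 1)
    simp only [hg]
    linarith
  -- existence of a root via IVT
  obtain ⟨r, hr, hgr⟩ : ∃ r ∈ Ioo m₀ 1, g r = 0 := by
    have := intermediate_value_Ioo' (le_of_lt hm₀1) hgc.continuousOn
      (show (0:ℝ) ∈ Ioo (g 1) (g m₀) from ⟨hg1, hgm₀⟩)
    obtain ⟨r, hr, hgr⟩ := this
    exact ⟨r, hr, hgr⟩
  have hr0 : 0 < r := lt_trans hm₀0 hr.1
  have hrfix : Real.tanh (β * r) = r := by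
    have : Real.tanh (β * r) - r = 0 := hgr
    linarith
  -- uniqueness
  have huniq : ∀ a b : ℝ, 0 < a → Real.tanh (β * a) = a → 0 < b →
      Real.tanh (β * b) = b → a < b → False := by
    intro a b ha hfa hb hfb hab
    have hsc := tanh_strictConcave
    set t : ℝ := a / b with ht
    have ht0 : 0 < t := div_pos ha hb
    have ht1 : t < 1 := (div_lt_one hb).2 hab
    have key := hsc.2 (show (0:ℝ) ∈ Ici (0:ℝ) from Set.self_mem_Ici)
      (show β * b ∈ Ici (0:ℝ) from le_of_lt (by positivity : (0:ℝ) < β * b))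
      (show (0:ℝ) ≠ β * b from (by positivity : (0:ℝ) < β * b).ne) (by linarith : 0 < 1 - t) ht0 (by ring)
    simp only [smul_eq_mul, mul_zero, Real.tanh_zero, zero_add] at key
    have harg : t * (β * b) = β * a := by
      rw [ht, div_mul_eq_mul_div, div_eq_iff hb.ne']
      ring
    rw [harg, hfa, hfb] at key
    have : t * b = a := by rw [ht]; exact div_mul_cancel₀ a hb.ne'
    rw [this] at key
    exact lt_irrefl a key
  constructor
  · refine ⟨r, ⟨hr0, hrfix⟩, ?_⟩
    rintro y ⟨hy0, hyfix⟩
    rcases lt_trichotomy y r with h | h | h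
    · exact absurd (huniq y r hy0 hyfix hr0 hrfix h) (fun h => h)
    · exact h
    · exact absurd (huniq r y hr0 hrfix hy0 hyfix h) (fun h => h)
  · intro m hm hfix
    refine ⟨hm, ?_⟩
    calc m = Real.tanh (β * m) := hfix.symm
    _ < 1 := tanh_lt_one' _
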